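/- Pitman-type transformation: suppose J < K, η has a carrier Y with associated M_n = Y_n + S_n - J/2 (S the path encoding of η). Then the path encoding T^Y S of the updated configuration T^Y η, defined by (T^Y η)_n = F^{(1)}_{J,K}(η_n, Y_{n-1}), satisfies T^Y S = 2M - S - 2M_0, i.e., (T^Y S)_n = 2M_n - S_n - 2M_0 for all n ∈ ℤ. -/

import Mathlib

/-- First component of the BBS(J,K) local update map. -/
def F1 (J K a b : ℤ) : ℤ := a + min b (J - a) - min a (K - b)

/-- Second component of the BBS(J,K) local update map. -/
def F2 (J K a b : ℤ) : ℤ := b - min b (J - a) + min a (K - b)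

theorem pitman_transformation (J K : ℤ) (hJ : 0 < J) (hJK : J < K)
    (η S Y TS : ℤ → ℤ)
    (hη : ∀ n, 0 ≤ η n ∧ η n ≤ J)
    (hS0 : S 0 = 0)
    (hSinc : ∀ n, S n - S (n - 1) = J - 2 * η n)
    (hY : ∀ n, 0 ≤ Y n ∧ Y n ≤ K)
    (hcar : ∀ n, Y n = F2 J K (η n) (Y (n - 1)))
    (hTS0 : TS 0 = 0)
    (hTSinc : ∀ n, TS n - TS (n - 1) = J - 2 * F1 J K (η n) (Y (n - 1))) :
    ∀ n, TS n = (2 * Y n + 2 * S n - J) - S n - (2 * Y 0 + 2 * S 0 - J) := by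
  have key : ∀ n : ℤ, TS n - TS (n - 1) = (2 * Y n + S n) - (2 * Y (n - 1) + S (n - 1)) := by
    intro n
    have h1 := hTSinc n
    have h2 := hSinc n
    have h3 := hcar n
    simp only [F1, F2] at h1 h3
    omega
  have main : ∀ n : ℤ, TS n = 2 * Y n + S n - 2 * Y 0 - S 0 := by
    intro n
    induction n using Int.induction_on with
    | zero => omega
    | succ k ih =>
      have := key (k + 1)
      simp only [add_sub_cancel_right] at this
      omega
    | pred k ih =>
      have := key (-k)
      omega
  intro n
  have := main n
  omega
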